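/- arXiv:2402.10780 — 8 statements merged into one kernel-verified Lean document; each statement's English description precedes it below -/
import Mathlib

section
/- For q > 0, the union over k ∈ (-π, π] of the spectra of the matrices H(k) (with H(k) as vertex-diagonal 2+q, 2-q and off-diagonal -(1+e^{±ik})) equals the set [2 - √(4+q²), 2-q] ∪ [2+q, 2+√(4+q²)]. In particular this set has a gap of length 2q. -/
open Real Complex

lemma spec_iff_aux (q x k : ℝ) :
    ((x : ℂ) ∈ spectrum ℂ
      (!![((2 : ℝ) + q : ℂ), -(1 + Complex.exp (Complex.I * k));
          -(1 + Complex.exp (-(Complex.I * k))), ((2 : ℝ) - q : ℂ)])) ↔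
    (x - 2) ^ 2 = q ^ 2 + 2 + 2 * Real.cos k := by
  rw [spectrum.mem_iff, Matrix.isUnit_iff_isUnit_det, isUnit_iff_ne_zero, not_not]
  simp only [Matrix.det_fin_two, Matrix.sub_apply, Matrix.algebraMap_eq_diagonal,
    Pi.algebraMap_apply, Algebra.algebraMap_self, RingHom.id_apply]
  simp [Matrix.det_fin_two, Matrix.sub_apply, Matrix.algebraMap_eq_diagonal]
  have hexp : Complex.exp (Complex.I * k) * Complex.exp (-(Complex.I * k)) = 1 := by
    rw [← Complex.exp_add]; simp
  have hcos : Complex.exp (Complex.I * k) + Complex.exp (-(Complex.I * k))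
      = 2 * Complex.cos k := by
    rw [Complex.cos]; ring_nf
  constructor
  · intro h
    have h2 : (((x - 2) ^ 2 - (q ^ 2 + 2 + 2 * Real.cos k) : ℝ) : ℂ) = 0 := by
      push_cast [Complex.ofReal_cos]
      linear_combination h + hexp + hcos
    have := Complex.ofReal_eq_zero.mp h2
    linarith
  · intro h
    have h2 : (((x - 2) ^ 2 - (q ^ 2 + 2 + 2 * Real.cos k) : ℝ) : ℂ) = 0 := by
      rw [h]; push_cast; ring
    push_cast [Complex.ofReal_cos] at h2
    linear_combination h2 - hexp - hcos

/-- The union over `k ∈ (-π, π]` of the spectra of the fiber operators `H(k)` equals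
`[2-√(4+q²), 2-q] ∪ [2+q, 2+√(4+q²)]`; in particular this set has a gap of
length `2q`. -/
theorem spectrum_1d_lattice (q : ℝ) (hq : 0 < q) :
    (⋃ k ∈ Set.Ioc (-π) π,
        {x : ℝ | (x : ℂ) ∈ spectrum ℂ
          (!![((2 : ℝ) + q : ℂ), -(1 + Complex.exp (Complex.I * k));
              -(1 + Complex.exp (-(Complex.I * k))), ((2 : ℝ) - q : ℂ)])}) =
      Set.Icc (2 - Real.sqrt (4 + q ^ 2)) (2 - q) ∪
        Set.Icc (2 + q) (2 + Real.sqrt (4 + q ^ 2)) ∧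
    (Set.Icc (2 - Real.sqrt (4 + q ^ 2)) (2 - q) ∪
        Set.Icc (2 + q) (2 + Real.sqrt (4 + q ^ 2))) ∩
      Set.Ioo (2 - q) (2 + q) = ∅ ∧ (2 + q) - (2 - q) = 2 * q := by
  have hs0 : (0:ℝ) ≤ 4 + q ^ 2 := by positivity
  set s := Real.sqrt (4 + q ^ 2) with hs
  have hs2 : s ^ 2 = 4 + q ^ 2 := Real.sq_sqrt hs0
  have hsnn : 0 ≤ s := Real.sqrt_nonneg _
  have hqs : q ≤ s := by nlinarith
  refine ⟨?_, ?_, by ring⟩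
  · ext x
    simp only [Set.mem_iUnion, Set.mem_setOf_eq, spec_iff_aux, Set.mem_union, Set.mem_Icc,
      exists_prop, Set.mem_Ioc]
    constructor
    · rintro ⟨k, ⟨hk1, hk2⟩, h⟩
      have hc1 : -1 ≤ Real.cos k := Real.neg_one_le_cos k
      have hc2 : Real.cos k ≤ 1 := Real.cos_le_one k
      have hlo : q ^ 2 ≤ (x - 2) ^ 2 := by nlinarith
      have hhi : (x - 2) ^ 2 ≤ s ^ 2 := by nlinarith
      rcases le_or_gt 2 x with hx | hx
      · right
        constructor
        · nlinarith
        · nlinarith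
      · left
        constructor
        · nlinarith
        · nlinarith
    · intro hx
      have hlo : q ^ 2 ≤ (x - 2) ^ 2 := by
        rcases hx with ⟨h1, h2⟩ | ⟨h1, h2⟩ <;> nlinarith
      have hhi : (x - 2) ^ 2 ≤ 4 + q ^ 2 := by
        rcases hx with ⟨h1, h2⟩ | ⟨h1, h2⟩ <;> nlinarith
      set c : ℝ := ((x - 2) ^ 2 - q ^ 2 - 2) / 2 with hc
      have hc1 : -1 ≤ c := by rw [hc]; nlinarith
      have hc2 : c ≤ 1 := by rw [hc]; nlinarith
      refine ⟨Real.arccos c, ⟨?_, Real.arccos_le_pi c⟩, ?_⟩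
      · have := Real.arccos_nonneg c
        have := Real.pi_pos
        linarith
      · rw [Real.cos_arccos hc1 hc2, hc]; ring
  · rw [Set.eq_empty_iff_forall_notMem]
    rintro y ⟨hy1 | hy1, hy2⟩
    · exact absurd hy1.2 (not_le.mpr hy2.1)
    · exact absurd hy1.1 (not_le.mpr hy2.2)
end

section
/- Define f : ℝ² → ℝ by f(k₁, k₂) = 3 + 2cos k₁ + 2cos k₂ + 2cos(k₁ + k₂). Then f(k) = |1 + e^{ik₁} + e^{-ik₂}|², the minimum of f over ℝ² is 0, attained at (k₁, k₂) = ±(2π/3, 2π/3) (modulo 2π), and the maximum of f is 9, attained at (0,0) (modulo 2π). -/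
open Real Complex
lemma cos_two_pi_div_three' : Real.cos (2 * π / 3) = -(1/2) := by
  have : (2:ℝ) * π / 3 = π - π/3 := by ring
  rw [this, Real.cos_pi_sub, Real.cos_pi_div_three]

lemma sin_two_pi_div_three' : Real.sin (2 * π / 3) = Real.sqrt 3 / 2 := by
  have : (2:ℝ) * π / 3 = π - π/3 := by ring
  rw [this, Real.sin_pi_sub, Real.sin_pi_div_three]

lemma cos_neg_half_iff {x : ℝ} : Real.cos x = -(1/2) ↔
    ∃ m : ℤ, x = 2 * π / 3 + 2 * π * m ∨ x = -(2 * π / 3) + 2 * π * m := by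
  rw [← cos_two_pi_div_three', Real.cos_eq_cos_iff]
  constructor
  · rintro ⟨k, h | h⟩
    · exact ⟨-k, Or.inl (by push_cast; linarith [h])⟩
    · exact ⟨k, Or.inr (by linarith [h])⟩
  · rintro ⟨m, h | h⟩
    · exact ⟨-m, Or.inl (by push_cast; linarith [h])⟩
    · exact ⟨m, Or.inr (by linarith [h])⟩

lemma cos_shift (x : ℝ) (m : ℤ) : Real.cos (x + 2 * π * m) = Real.cos x := by
  have := Real.cos_add_int_mul_two_pi x m
  rw [show (m:ℝ) * (2*π) = 2*π*m by ring] at this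
  exact this

lemma sin_shift (x : ℝ) (m : ℤ) : Real.sin (x + 2 * π * m) = Real.sin x := by
  have := Real.sin_add_int_mul_two_pi x m
  rw [show (m:ℝ) * (2*π) = 2*π*m by ring] at this
  exact this

/-- The hexagonal-lattice symbol `f(k₁,k₂) = 3 + 2cos k₁ + 2cos k₂ + 2cos(k₁+k₂)`
equals `|1 + e^{ik₁} + e^{-ik₂}|²`, has minimum `0` attained exactly at
`±(2π/3, 2π/3)` mod `2π`, and maximum `9` attained exactly at `(0,0)` mod `2π`. -/
theorem hexagonal_symbol_properties
    (f : ℝ → ℝ → ℝ)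
    (hf : ∀ k₁ k₂, f k₁ k₂ = 3 + 2 * Real.cos k₁ + 2 * Real.cos k₂ +
      2 * Real.cos (k₁ + k₂)) :
    (∀ k₁ k₂ : ℝ, f k₁ k₂ =
        ‖(1 + Complex.exp (Complex.I * k₁) +
          Complex.exp (-(Complex.I * k₂)))‖ ^ 2) ∧
    (∀ k₁ k₂ : ℝ, 0 ≤ f k₁ k₂ ∧ f k₁ k₂ ≤ 9) ∧
    (∀ k₁ k₂ : ℝ, f k₁ k₂ = 0 ↔
      (∃ m n : ℤ, (k₁ = 2 * π / 3 + 2 * π * m ∧ k₂ = 2 * π / 3 + 2 * π * n) ∨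
        (k₁ = -(2 * π / 3) + 2 * π * m ∧ k₂ = -(2 * π / 3) + 2 * π * n))) ∧
    (∀ k₁ k₂ : ℝ, f k₁ k₂ = 9 ↔
      ∃ m n : ℤ, k₁ = 2 * π * m ∧ k₂ = 2 * π * n) := by
  refine ⟨?_, ?_, ?_, ?_⟩
  · intro k₁ k₂
    rw [hf]
    rw [show Complex.I * (k₁:ℂ) = (k₁:ℂ) * Complex.I by ring,
        show -(Complex.I * (k₂:ℂ)) = ((-k₂ : ℝ):ℂ) * Complex.I by push_cast; ring,
        Complex.exp_mul_I, Complex.exp_mul_I, Complex.sq_norm]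
    simp only [Complex.normSq_apply, Complex.add_re, Complex.add_im, Complex.one_re,
      Complex.one_im, Complex.mul_re, Complex.mul_im, Complex.I_re, Complex.I_im,
      Complex.cos_ofReal_re, Complex.cos_ofReal_im, Complex.sin_ofReal_re,
      Complex.sin_ofReal_im, Real.cos_neg, Real.sin_neg]
    rw [Real.cos_add]
    nlinarith [Real.sin_sq_add_cos_sq k₁, Real.sin_sq_add_cos_sq k₂]
  · intro k₁ k₂
    rw [hf]
    constructor
    · rw [Real.cos_add]
      nlinarith [Real.sin_sq_add_cos_sq k₁, Real.sin_sq_add_cos_sq k₂,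
        sq_nonneg (1 + Real.cos k₁ + Real.cos k₂), sq_nonneg (Real.sin k₁ - Real.sin k₂)]
    · nlinarith [Real.cos_le_one k₁, Real.cos_le_one k₂, Real.cos_le_one (k₁+k₂)]
  · intro k₁ k₂
    rw [hf]
    constructor
    · intro h
      rw [Real.cos_add] at h
      have p1 := Real.sin_sq_add_cos_sq k₁
      have p2 := Real.sin_sq_add_cos_sq k₂
      have hA : 1 + Real.cos k₁ + Real.cos k₂ = 0 := by
        nlinarith [sq_nonneg (1 + Real.cos k₁ + Real.cos k₂),
          sq_nonneg (Real.sin k₁ - Real.sin k₂)]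
      have hs : Real.sin k₁ = Real.sin k₂ := by
        nlinarith [sq_nonneg (1 + Real.cos k₁ + Real.cos k₂),
          sq_nonneg (Real.sin k₁ - Real.sin k₂)]
      have hs2 : Real.sin k₁ ^ 2 = Real.sin k₂ ^ 2 := by rw [hs]
      have hsq : Real.cos k₁ ^ 2 = Real.cos k₂ ^ 2 := by linarith
      have hc2' : Real.cos k₂ = -1 - Real.cos k₁ := by linarith
      rw [hc2'] at hsq
      have hc1 : Real.cos k₁ = -(1/2) := by nlinarith [hsq]
      have hc2 : Real.cos k₂ = -(1/2) := by rw [hc2', hc1]; ring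
      obtain ⟨m, hm⟩ := cos_neg_half_iff.1 hc1
      obtain ⟨n, hn⟩ := cos_neg_half_iff.1 hc2
      have hs3 : Real.sqrt 3 / 2 ≠ -(Real.sqrt 3 / 2) := by
        have : (0:ℝ) < Real.sqrt 3 := Real.sqrt_pos.2 (by norm_num)
        intro h'; linarith
      rcases hm with hm | hm <;> rcases hn with hn | hn
      · exact ⟨m, n, Or.inl ⟨hm, hn⟩⟩
      · exfalso
        rw [hm, hn, sin_shift, sin_shift, show -(2*π/3) = -(2*π/3) by rfl,
          Real.sin_neg, sin_two_pi_div_three'] at hs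
        exact hs3 hs
      · exfalso
        rw [hm, hn, sin_shift, sin_shift, Real.sin_neg, sin_two_pi_div_three'] at hs
        exact hs3 hs.symm
      · exact ⟨m, n, Or.inr ⟨hm, hn⟩⟩
    · rintro ⟨m, n, ⟨h1, h2⟩ | ⟨h1, h2⟩⟩ <;> subst h1 <;> subst h2
      · rw [show 2*π/3 + 2*π*(m:ℝ) + (2*π/3 + 2*π*(n:ℝ))
            = -(2*π/3) + 2*π*((m+n+1 : ℤ) : ℝ) by push_cast; ring,
          cos_shift, cos_shift, cos_shift, Real.cos_neg, cos_two_pi_div_three']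
        ring
      · rw [show -(2*π/3) + 2*π*(m:ℝ) + (-(2*π/3) + 2*π*(n:ℝ))
            = 2*π/3 + 2*π*((m+n-1 : ℤ) : ℝ) by push_cast; ring,
          cos_shift, cos_shift, cos_shift, Real.cos_neg, cos_two_pi_div_three']
        ring
  · intro k₁ k₂
    rw [hf]
    constructor
    · intro h
      have hc1 : Real.cos k₁ = 1 := by
        nlinarith [Real.cos_le_one k₁, Real.cos_le_one k₂, Real.cos_le_one (k₁+k₂)]
      have hc2 : Real.cos k₂ = 1 := by
        nlinarith [Real.cos_le_one k₁, Real.cos_le_one k₂, Real.cos_le_one (k₁+k₂)]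
      obtain ⟨m, hm⟩ := (Real.cos_eq_one_iff k₁).1 hc1
      obtain ⟨n, hn⟩ := (Real.cos_eq_one_iff k₂).1 hc2
      exact ⟨m, n, by linarith, by linarith⟩
    · rintro ⟨m, n, rfl, rfl⟩
      rw [show 2*π*(m:ℝ) = 0 + 2*π*(m:ℝ) by ring,
          show 2*π*(n:ℝ) = 0 + 2*π*(n:ℝ) by ring,
          show (0:ℝ) + 2*π*(m:ℝ) + (0 + 2*π*(n:ℝ)) = 0 + 2*π*((m+n:ℤ):ℝ) by push_cast; ring,
          cos_shift, cos_shift, cos_shift, Real.cos_zero]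
      ring
end

section
/- For q > 0, the union over k = (k₁,k₂) ∈ (-π,π]² of the eigenvalues of the Hermitian matrix H(k) with H₁₁ = 3+q, H₂₂ = 3-q, H₁₂ = -(1 + e^{ik₁} + e^{-ik₂}), H₂₁ = conj(H₁₂) equals [3 - √(9+q²), 3-q] ∪ [3+q, 3+√(9+q²)]. -/
open Real Complex

private lemma specVal (q x k₁ k₂ : ℝ) :
    ((x : ℂ) ∈ spectrum ℂ
      (!![((3 : ℝ) + q : ℂ),
          -(1 + Complex.exp (Complex.I * (k₁ : ℝ)) + Complex.exp (-(Complex.I * (k₂ : ℝ))));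
          -(1 + Complex.exp (-(Complex.I * (k₁ : ℝ))) + Complex.exp (Complex.I * (k₂ : ℝ))),
          ((3 : ℝ) - q : ℂ)])) ↔
    (x - 3) ^ 2 = q ^ 2 + Complex.normSq (1 + Complex.exp (Complex.I * k₁) + Complex.exp (-(Complex.I * k₂))) := by
  set w : ℂ := 1 + Complex.exp (Complex.I * k₁) + Complex.exp (-(Complex.I * k₂)) with hw
  have hconj : (1 + Complex.exp (-(Complex.I * k₁)) + Complex.exp (Complex.I * k₂)) = starRingEnd ℂ w := by
    rw [hw]
    simp only [map_add, map_one, ← Complex.exp_conj, map_mul, map_neg, Complex.conj_I,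
      Complex.conj_ofReal]
    ring_nf
  rw [hconj, spectrum.mem_iff, Matrix.isUnit_iff_isUnit_det, isUnit_iff_ne_zero, not_ne_iff]
  set M : Matrix (Fin 2) (Fin 2) ℂ := !![((3 : ℝ) + q : ℂ), -w; -(starRingEnd ℂ w), ((3 : ℝ) - q : ℂ)] with hM
  have e00 : (algebraMap ℂ (Matrix (Fin 2) (Fin 2) ℂ) (x:ℂ) - M) 0 0 = (x:ℂ) - ((3:ℝ) + (q:ℝ)) := by
    simp [hM, Matrix.algebraMap_matrix_apply]
  have e11 : (algebraMap ℂ (Matrix (Fin 2) (Fin 2) ℂ) (x:ℂ) - M) 1 1 = (x:ℂ) - ((3:ℝ) - (q:ℝ)) := by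
    simp [hM, Matrix.algebraMap_matrix_apply]
  have e01 : (algebraMap ℂ (Matrix (Fin 2) (Fin 2) ℂ) (x:ℂ) - M) 0 1 = w := by
    simp [hM, Matrix.algebraMap_matrix_apply]
  have e10 : (algebraMap ℂ (Matrix (Fin 2) (Fin 2) ℂ) (x:ℂ) - M) 1 0 = starRingEnd ℂ w := by
    simp [hM, Matrix.algebraMap_matrix_apply]
  rw [Matrix.det_fin_two, e00, e11, e01, e10]
  have key : ((x:ℂ) - ((3:ℝ) + (q:ℝ))) * ((x:ℂ) - ((3:ℝ) - (q:ℝ))) - w * starRingEnd ℂ w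
      = ((((x - 3)^2 - q^2 - Complex.normSq w : ℝ)) : ℂ) := by
    rw [Complex.mul_conj]
    push_cast
    ring
  rw [key, Complex.ofReal_eq_zero]
  constructor <;> intro h <;> linarith

private lemma real_form (s : ℝ) :
    (1 : ℂ) + Complex.exp (Complex.I * s) + Complex.exp (-(Complex.I * s))
      = ((1 + 2 * Real.cos s : ℝ) : ℂ) := by
  rw [show Complex.I * (s:ℂ) = (s:ℂ) * Complex.I by ring,
      show -((s:ℂ) * Complex.I) = ((-s : ℝ) : ℂ) * Complex.I by push_cast; ring,
      Complex.exp_mul_I, Complex.exp_mul_I]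
  push_cast
  rw [Complex.cos_neg, Complex.sin_neg, ← Complex.ofReal_cos]
  push_cast
  ring

private lemma surj (t : ℝ) (ht : t ∈ Set.Icc (0:ℝ) 9) :
    ∃ s ∈ Set.Icc (0:ℝ) (2*π/3),
      Complex.normSq (1 + Complex.exp (Complex.I * s) + Complex.exp (-(Complex.I * s))) = t := by
  have hpi := Real.pi_gt_three
  have hcont : ContinuousOn (fun s : ℝ => (1 + 2 * Real.cos s)^2) (Set.Icc 0 (2*π/3)) := by
    fun_prop
  have hab : (0:ℝ) ≤ 2*π/3 := by linarith
  have := intermediate_value_Icc' hab hcont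
  have h0 : (1 + 2 * Real.cos (0:ℝ))^2 = 9 := by norm_num
  have h1 : (1 + 2 * Real.cos (2*π/3))^2 = 0 := by
    rw [show (2*π/3 : ℝ) = π - π/3 by ring, Real.cos_pi_sub, Real.cos_pi_div_three]
    norm_num
  rw [h0, h1] at this
  obtain ⟨s, hs, hst⟩ := this ht
  exact ⟨s, hs, by rw [real_form, Complex.normSq_ofReal, ← sq]; exact hst⟩

private lemma bound (k₁ k₂ : ℝ) :
    Complex.normSq (1 + Complex.exp (Complex.I * k₁) + Complex.exp (-(Complex.I * k₂)))
      ∈ Set.Icc (0:ℝ) 9 := by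
  refine ⟨Complex.normSq_nonneg _, ?_⟩
  set w : ℂ := 1 + Complex.exp (Complex.I * k₁) + Complex.exp (-(Complex.I * k₂))
  have h1 : ‖Complex.exp (Complex.I * k₁)‖ = 1 := by
    rw [mul_comm]; exact Complex.norm_exp_ofReal_mul_I k₁
  have h2 : ‖Complex.exp (-(Complex.I * k₂))‖ = 1 := by
    rw [show -(Complex.I * (k₂:ℂ)) = ((-k₂ : ℝ) : ℂ) * Complex.I by push_cast; ring]
    exact Complex.norm_exp_ofReal_mul_I _
  have habs : ‖w‖ ≤ 3 := by
    calc ‖w‖ ≤ ‖1 + Complex.exp (Complex.I * k₁)‖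
        + ‖Complex.exp (-(Complex.I * k₂))‖ := norm_add_le _ _
      _ ≤ (‖(1:ℂ)‖ + ‖Complex.exp (Complex.I * k₁)‖)
        + ‖Complex.exp (-(Complex.I * k₂))‖ := by gcongr; exact norm_add_le _ _
      _ = 3 := by rw [h1, h2]; norm_num
  have h0 : 0 ≤ ‖w‖ := norm_nonneg _
  rw [← Complex.sq_norm]
  nlinarith

/-- The union over `k ∈ (-π,π]²` of the eigenvalues of the hexagonal-lattice fiber
operator `H(k)` equals `[3-√(9+q²), 3-q] ∪ [3+q, 3+√(9+q²)]`. -/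
theorem spectrum_hexagonal_lattice (q : ℝ) (hq : 0 < q) :
    (⋃ k ∈ Set.Ioc (-π) π ×ˢ Set.Ioc (-π) π,
        {x : ℝ | (x : ℂ) ∈ spectrum ℂ
          (!![((3 : ℝ) + q : ℂ),
              -(1 + Complex.exp (Complex.I * (k.1 : ℝ)) +
                Complex.exp (-(Complex.I * (k.2 : ℝ))));
              -(1 + Complex.exp (-(Complex.I * (k.1 : ℝ))) +
                Complex.exp (Complex.I * (k.2 : ℝ))), ((3 : ℝ) - q : ℂ)])}) =
      Set.Icc (3 - Real.sqrt (9 + q ^ 2)) (3 - q) ∪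
        Set.Icc (3 + q) (3 + Real.sqrt (9 + q ^ 2)) := by
  have hpi := Real.pi_gt_three
  have h9 : (0:ℝ) ≤ 9 + q^2 := by positivity
  set r := Real.sqrt (9 + q^2) with hrdef
  have hr2 : r^2 = 9 + q^2 := Real.sq_sqrt h9
  have hr0 : 0 ≤ r := Real.sqrt_nonneg _
  ext x
  simp only [Set.mem_iUnion, Set.mem_setOf_eq, Set.mem_prod, Set.mem_Ioc, exists_prop,
    Set.mem_union, Set.mem_Icc]
  constructor
  · rintro ⟨⟨k₁, k₂⟩, ⟨⟨h1a, h1b⟩, h2a, h2b⟩, hx⟩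
    rw [specVal] at hx
    obtain ⟨hb0, hb9⟩ := bound k₁ k₂
    rcases le_total x 3 with hx3 | hx3
    · left
      constructor <;> nlinarith
    · right
      constructor <;> nlinarith
  · intro hx
    have ht : (x-3)^2 - q^2 ∈ Set.Icc (0:ℝ) 9 := by
      rcases hx with ⟨ha, hb⟩ | ⟨ha, hb⟩ <;> constructor <;> nlinarith
    obtain ⟨s, ⟨hs0, hs1⟩, hst⟩ := surj _ ht
    refine ⟨(s, s), ⟨⟨by linarith, by linarith⟩, by linarith, by linarith⟩, ?_⟩
    rw [specVal, hst]
    ring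
end

section
/- Let d ≥ 1 and t ∈ ℤ^d with t₁ + ... + t_d even and t ≠ 0. Define λ_t(k) = 2(d+1) - 2Σ_{j=1}^d cos k_j - 2cos(⟨t,k⟩) on ℝ^d. Then the supremum of λ_t over ℝ^d is strictly less than 4(d+1). -/
open Real

/-- If `t ≠ 0` and `t₁ + ... + t_d` is even, then the supremum of the perturbed band
function `λ_t(k) = 2(d+1) - 2Σ cos kᵢ - 2cos(⟨t,k⟩)` is strictly less than
`4(d+1)`. -/
theorem perturbed_lattice_sup_even (d : ℕ) (hd : 1 ≤ d) (t : Fin d → ℤ)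
    (ht : Even (∑ i, t i)) (ht0 : t ≠ 0)
    (lam : (Fin d → ℝ) → ℝ)
    (hlam : ∀ k, lam k = 2 * (d + 1) - 2 * ∑ i, Real.cos (k i) -
      2 * Real.cos (∑ i, (t i : ℝ) * k i)) :
    sSup (Set.range lam) < 4 * (d + 1) := by
  have hlam' : lam = fun k => 2 * (d + 1) - 2 * ∑ i, Real.cos (k i) -
      2 * Real.cos (∑ i, (t i : ℝ) * k i) := funext hlam
  subst hlam'
  set f : (Fin d → ℝ) → ℝ := fun k => 2 * (d + 1) - 2 * ∑ i, Real.cos (k i) -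
      2 * Real.cos (∑ i, (t i : ℝ) * k i) with hf
  have hcont : Continuous f := by
    apply Continuous.sub
    · apply Continuous.sub continuous_const
      exact continuous_const.mul (continuous_finset_sum _ fun i _ =>
        (Real.continuous_cos.comp (continuous_apply i)))
    · exact continuous_const.mul (Real.continuous_cos.comp
        (continuous_finset_sum _ fun i _ => continuous_const.mul (continuous_apply i)))
  set K : Set (Fin d → ℝ) := Set.pi Set.univ (fun _ => Set.Icc 0 (2 * π)) with hK
  have hKc : IsCompact K := isCompact_univ_pi fun _ => isCompact_Icc
  have hKne : K.Nonempty := ⟨fun _ => 0, fun i _ => ⟨le_refl 0, by positivity⟩⟩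
  obtain ⟨k₀, hk₀K, hk₀max⟩ := hKc.exists_isMaxOn hKne hcont.continuousOn
  -- periodicity: every value of f is attained on K
  have hper : ∀ k, f k ≤ f k₀ := by
    intro k
    set n : Fin d → ℤ := fun i => ⌊k i / (2 * π)⌋ with hn
    set k' : Fin d → ℝ := fun i => k i - n i * (2 * π) with hk'
    have hk'K : k' ∈ K := by
      intro i _
      have hpos : (0:ℝ) < 2 * π := by positivity
      constructor
      · have h1 := Int.sub_floor_div_mul_nonneg (k i) hpos
        simpa [hk', hn] using h1
      · have h2 := (Int.sub_floor_div_mul_lt (k i) hpos).le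
        simpa [hk', hn] using h2
    have hfeq : f k = f k' := by
      have h1 : ∀ i, Real.cos (k i) = Real.cos (k' i) := by
        intro i
        have : k i = k' i + n i * (2 * π) := by simp [hk']
        rw [this, Real.cos_add_int_mul_two_pi]
      have h2 : Real.cos (∑ i, (t i : ℝ) * k i) = Real.cos (∑ i, (t i : ℝ) * k' i) := by
        have : ∑ i, (t i : ℝ) * k i
            = (∑ i, (t i : ℝ) * k' i) + (∑ i, t i * n i : ℤ) * (2 * π) := by
          push_cast
          rw [Finset.sum_mul, ← Finset.sum_add_distrib]
          refine Finset.sum_congr rfl fun i _ => ?_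
          simp [hk']; ring
        rw [this, Real.cos_add_int_mul_two_pi]
      simp only [hf]
      rw [Finset.sum_congr rfl (fun i _ => h1 i), h2]
    rw [hfeq]
    exact hk₀max hk'K
  have hlt : f k₀ < 4 * (d + 1) := by
    by_contra h
    push_neg at h
    -- then all cos(k₀ i) = -1 and cos S = -1
    have hS : Real.cos (∑ i, (t i : ℝ) * k₀ i) ≥ -1 := Real.neg_one_le_cos _
    have hsum : ∑ i, Real.cos (k₀ i) ≥ -(d : ℝ) := by
      have : ∀ i ∈ Finset.univ, (-1 : ℝ) ≤ Real.cos (k₀ i) := fun i _ => Real.neg_one_le_cos _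
      calc -(d:ℝ) = ∑ _i : Fin d, (-1:ℝ) := by simp
        _ ≤ _ := Finset.sum_le_sum this
    have hsum' : ∑ i, Real.cos (k₀ i) = -(d : ℝ) := by
      simp only [hf] at h; nlinarith
    have hS' : Real.cos (∑ i, (t i : ℝ) * k₀ i) = -1 := by
      simp only [hf] at h; nlinarith
    have hall : ∀ i, Real.cos (k₀ i) = -1 := by
      have hz : ∑ i, (Real.cos (k₀ i) + 1) = 0 := by
        rw [Finset.sum_add_distrib, hsum']; simp
      have := (Finset.sum_eq_zero_iff_of_nonneg
        (fun i _ => by linarith [Real.neg_one_le_cos (k₀ i)])).mp hz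
      intro i; have := this i (Finset.mem_univ i); linarith
    -- each k₀ i = π + mᵢ·2π
    have hm : ∀ i, ∃ m : ℤ, k₀ i = π + m * (2 * π) := by
      intro i
      obtain ⟨m, hm⟩ := Real.cos_eq_neg_one_iff.mp (hall i)
      exact ⟨m, hm.symm⟩
    choose m hm using hm
    obtain ⟨r, hr⟩ := ht
    have : (∑ i, (t i : ℝ) * k₀ i) = (r + ∑ i, t i * m i : ℤ) * (2 * π) := by
      have h1 : ∑ i, (t i : ℝ) * k₀ i = (∑ i, (t i:ℝ)) * π + (∑ i, (t i:ℝ) * m i) * (2*π) := by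
        rw [Finset.sum_congr rfl (fun i _ => by rw [hm i]),
          Finset.sum_mul, Finset.sum_mul, ← Finset.sum_add_distrib]
        refine Finset.sum_congr rfl fun i _ => ?_
        ring
      rw [h1]
      have h2 : (∑ i, (t i:ℝ)) = 2 * (r:ℝ) := by
        have := congrArg (Int.cast : ℤ → ℝ) hr
        push_cast at this; linarith
      push_cast
      rw [h2]; ring
    rw [this, Real.cos_int_mul_two_pi] at hS'
    norm_num at hS'
  calc sSup (Set.range f) ≤ f k₀ := csSup_le (Set.range_nonempty _)
        (by rintro x ⟨k, rfl⟩; exact hper k)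
    _ < 4 * (d + 1) := hlt
end

section
/- Let t ∈ ℤ with t ≡ 1 (mod 3), and define g : ℝ → ℝ by g(k) = 3 + 2cos k + 2cos(tk) + 2cos((t+1)k). Then the minimum of g over ℝ is 0, attained at k = 2π/3. -/
open Real

/-- For `t ≡ 1 (mod 3)`, the function
`g(k) = 3 + 2cos k + 2cos(tk) + 2cos((t+1)k)` has minimum `0` over `ℝ`, attained at
`k = 2π/3`. -/
theorem perturbed_1d_symbol_min (t : ℤ) (ht : (3 : ℤ) ∣ (t - 1))
    (g : ℝ → ℝ)
    (hg : ∀ k, g k = 3 + 2 * Real.cos k + 2 * Real.cos ((t : ℝ) * k) +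
      2 * Real.cos (((t : ℝ) + 1) * k)) :
    IsLeast (Set.range g) 0 ∧ g (2 * π / 3) = 0 := by
  obtain ⟨m, hm⟩ := ht
  have htm : (t : ℝ) = 3 * m + 1 := by
    have : t = 3 * m + 1 := by linarith [hm]
    exact_mod_cast congrArg (Int.cast : ℤ → ℝ) this
  have key : ∀ k, g k = (1 + Real.cos k + Real.cos ((t : ℝ) * k)) ^ 2
      + (Real.sin k - Real.sin ((t : ℝ) * k)) ^ 2 := by
    intro k
    have h1 : ((t : ℝ) + 1) * k = k + (t : ℝ) * k := by ring
    rw [hg k, h1, Real.cos_add]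
    have h2 := Real.sin_sq_add_cos_sq k
    have h3 := Real.sin_sq_add_cos_sq ((t : ℝ) * k)
    nlinarith [h2, h3]
  have hval : g (2 * π / 3) = 0 := by
    have e1 : (t : ℝ) * (2 * π / 3) = 2 * π / 3 + (m : ℝ) * (2 * π) := by
      rw [htm]; ring
    have e2 : ((t : ℝ) + 1) * (2 * π / 3) = -(2 * π / 3) + ((m : ℝ) + 1) * (2 * π) := by
      rw [htm]; ring
    have c0 : Real.cos (2 * π / 3) = -(1/2) := by
      have : (2 : ℝ) * π / 3 = π - π / 3 := by ring
      rw [this, Real.cos_pi_sub, Real.cos_pi_div_three]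
    have c1 : Real.cos ((t : ℝ) * (2 * π / 3)) = -(1/2) := by
      rw [e1]
      have := Real.cos_add_int_mul_two_pi (2 * π / 3) m
      rw [show ((m : ℝ)) * (2 * π) = (m : ℝ) * (2 * π) from rfl] at this
      rw [this, c0]
    have c2 : Real.cos (((t : ℝ) + 1) * (2 * π / 3)) = -(1/2) := by
      rw [e2]
      have h := Real.cos_add_int_mul_two_pi (-(2 * π / 3)) (m + 1)
      push_cast at h
      rw [h, Real.cos_neg, c0]
    rw [hg, c0, c1, c2]; ring
  refine ⟨⟨⟨2 * π / 3, hval⟩, ?_⟩, hval⟩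
  rintro x ⟨k, rfl⟩
  rw [key k]
  positivity
end

section
/- For q > 0, the union over k = (k₁,k₂,k₃) ∈ (-π,π]³ of the eigenvalues of the Hermitian matrix H(k) with H₁₁ = 4+q, H₂₂ = 4-q, H₁₂ = -(1 + e^{-ik₁} + e^{-ik₂} + e^{-ik₃}), H₂₁ = conj(H₁₂), equals [4 - √(16+q²), 4-q] ∪ [4+q, 4+√(16+q²)]. -/
open Real Complex


lemma mem_spec (a b c d x : ℂ) :
    x ∈ spectrum ℂ !![a, b; c, d] ↔ (x - a) * (x - d) - b * c = 0 := by
  rw [spectrum.mem_iff, Matrix.isUnit_iff_isUnit_det, isUnit_iff_ne_zero, not_ne_iff,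
    Matrix.det_fin_two]
  simp [Matrix.algebraMap_eq_diagonal]

noncomputable def fHex (k : ℝ × ℝ × ℝ) : ℝ :=
  Complex.normSq (1 + Complex.exp (Complex.I * (k.1 : ℝ)) +
    Complex.exp (Complex.I * (k.2.1 : ℝ)) + Complex.exp (Complex.I * (k.2.2 : ℝ)))

lemma bc_eq (k : ℝ × ℝ × ℝ) :
    -(1 + Complex.exp (-(Complex.I * (k.1 : ℝ))) +
        Complex.exp (-(Complex.I * (k.2.1 : ℝ))) +
        Complex.exp (-(Complex.I * (k.2.2 : ℝ)))) *
      -(1 + Complex.exp (Complex.I * (k.1 : ℝ)) +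
        Complex.exp (Complex.I * (k.2.1 : ℝ)) +
        Complex.exp (Complex.I * (k.2.2 : ℝ))) = (fHex k : ℂ) := by
  rw [fHex, Complex.normSq_eq_conj_mul_self, neg_mul_neg]
  congr 1
  simp [map_add, ← Complex.exp_conj, map_mul, Complex.conj_I, Complex.conj_ofReal, neg_mul]

lemma fHex_cont : Continuous fHex := by
  unfold fHex
  exact Complex.continuous_normSq.comp (by fun_prop)

lemma fHex_mem (k : ℝ × ℝ × ℝ) : fHex k ∈ Set.Icc (0:ℝ) 16 := by
  refine ⟨Complex.normSq_nonneg _, ?_⟩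
  rw [fHex, ← Complex.sq_norm]
  have h : ∀ t : ℝ, ‖Complex.exp (Complex.I * (t:ℝ))‖ = 1 := by
    intro t; rw [mul_comm]; exact Complex.norm_exp_ofReal_mul_I t
  have : ‖1 + Complex.exp (Complex.I * (k.1 : ℝ)) +
      Complex.exp (Complex.I * (k.2.1 : ℝ)) + Complex.exp (Complex.I * (k.2.2 : ℝ))‖ ≤ 4 := by
    calc _ ≤ ‖1 + Complex.exp (Complex.I * (k.1 : ℝ)) +
        Complex.exp (Complex.I * (k.2.1 : ℝ))‖ + 1 := by
          rw [← h k.2.2]; exact norm_add_le _ _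
      _ ≤ (‖1 + Complex.exp (Complex.I * (k.1 : ℝ))‖ + 1) + 1 := by
          rw [← h k.2.1]; gcongr; exact norm_add_le _ _
      _ ≤ ((‖(1 : ℂ)‖ + 1) + 1) + 1 := by
          rw [← h k.1]; gcongr; exact norm_add_le _ _
      _ = 4 := by simp; norm_num
  nlinarith [norm_nonneg (1 + Complex.exp (Complex.I * (k.1 : ℝ)) +
      Complex.exp (Complex.I * (k.2.1 : ℝ)) + Complex.exp (Complex.I * (k.2.2 : ℝ)))]

lemma fHex_zero : fHex (0, 0, 0) = 16 := by
  simp [fHex]; norm_num [Complex.normSq]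

lemma fHex_pi : fHex (π, 0, π) = 0 := by
  have : Complex.exp (Complex.I * (π : ℝ)) = -1 := by
    rw [mul_comm]; exact Complex.exp_pi_mul_I
  simp [fHex, this]

lemma real_char (q x : ℝ) (hq : 0 < q) :
    (∃ t ∈ Set.Icc (0:ℝ) 16, (x - (4 + q)) * (x - (4 - q)) - t = 0) ↔
      x ∈ Set.Icc (4 - Real.sqrt (16 + q ^ 2)) (4 - q) ∪
        Set.Icc (4 + q) (4 + Real.sqrt (16 + q ^ 2)) := by
  have hs : Real.sqrt (16 + q ^ 2) ^ 2 = 16 + q ^ 2 :=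
    Real.sq_sqrt (by positivity)
  have hs0 : 0 ≤ Real.sqrt (16 + q ^ 2) := Real.sqrt_nonneg _
  constructor
  · rintro ⟨t, ⟨ht0, ht16⟩, heq⟩
    rcases le_or_gt 4 x with hx | hx
    · right
      constructor
      · nlinarith
      · nlinarith
    · left
      constructor
      · nlinarith
      · nlinarith
  · rintro (⟨h1, h2⟩ | ⟨h1, h2⟩) <;>
      exact ⟨(x - 4) ^ 2 - q ^ 2, ⟨by nlinarith, by nlinarith⟩, by ring⟩

/-- The union over `k ∈ (-π,π]³` of the eigenvalues of the fiber operator `H(k)` for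
the limit graph of the perturbed hexagonal lattice equals
`[4-√(16+q²), 4-q] ∪ [4+q, 4+√(16+q²)]`. -/
theorem spectrum_limit_graph_hexagonal (q : ℝ) (hq : 0 < q) :
    (⋃ k ∈ Set.Ioc (-π) π ×ˢ Set.Ioc (-π) π ×ˢ Set.Ioc (-π) π,
        {x : ℝ | (x : ℂ) ∈ spectrum ℂ
          (!![((4 : ℝ) + q : ℂ),
              -(1 + Complex.exp (-(Complex.I * (k.1 : ℝ))) +
                Complex.exp (-(Complex.I * (k.2.1 : ℝ))) +
                Complex.exp (-(Complex.I * (k.2.2 : ℝ))));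
              -(1 + Complex.exp (Complex.I * (k.1 : ℝ)) +
                Complex.exp (Complex.I * (k.2.1 : ℝ)) +
                Complex.exp (Complex.I * (k.2.2 : ℝ))), ((4 : ℝ) - q : ℂ)])}) =
      Set.Icc (4 - Real.sqrt (16 + q ^ 2)) (4 - q) ∪
        Set.Icc (4 + q) (4 + Real.sqrt (16 + q ^ 2)) := by
  set K : Set (ℝ × ℝ × ℝ) := Set.Ioc (-π) π ×ˢ Set.Ioc (-π) π ×ˢ Set.Ioc (-π) π with hKdef
  have hK : IsPreconnected K :=
    isPreconnected_Ioc.prod (isPreconnected_Ioc.prod isPreconnected_Ioc)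
  have hmem0 : ((0 : ℝ), (0 : ℝ), (0 : ℝ)) ∈ K := by
    have := Real.pi_pos
    simp only [hKdef, Set.mem_prod, Set.mem_Ioc]
    refine ⟨⟨by linarith, by linarith⟩, ⟨by linarith, by linarith⟩, by linarith, by linarith⟩
  have hmem1 : ((π : ℝ), (0 : ℝ), (π : ℝ)) ∈ K := by
    have := Real.pi_pos
    simp only [hKdef, Set.mem_prod, Set.mem_Ioc]
    refine ⟨⟨by linarith, le_refl _⟩, ⟨by linarith, by linarith⟩, by linarith, le_refl _⟩
  have hsurj : Set.Icc (0 : ℝ) 16 ⊆ fHex '' K := by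
    have h := hK.intermediate_value hmem1 hmem0 fHex_cont.continuousOn
    rwa [fHex_pi, fHex_zero] at h
  ext x
  simp only [Set.mem_iUnion, Set.mem_setOf_eq, exists_prop]
  rw [← real_char q x hq]
  constructor
  · rintro ⟨k, hk, hx⟩
    rw [mem_spec, bc_eq] at hx
    refine ⟨fHex k, fHex_mem k, ?_⟩
    exact_mod_cast hx
  · rintro ⟨t, ht, hx⟩
    obtain ⟨k, hk, hfk⟩ := hsurj ht
    refine ⟨k, hk, ?_⟩
    rw [mem_spec, bc_eq, hfk]
    exact_mod_cast hx
end

section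
/- Let q > 0 and t ∈ ℤ with t ≡ 1 (mod 3). Then the range of the function k ↦ 3 - √(g(k) + q²) over k ∈ ℝ, where g(k) = 3 + 2cos k + 2cos(tk) + 2cos((t+1)k), equals the interval [3 - √(9+q²), 3 - q]. -/
open Real

/-- For `q > 0` and `t ≡ 1 (mod 3)`, the range of `k ↦ 3 - √(g(k) + q²)`, where
`g(k) = 3 + 2cos k + 2cos(tk) + 2cos((t+1)k)`, equals `[3 - √(9+q²), 3 - q]`. -/
theorem first_band_perturbed_1d (q : ℝ) (hq : 0 < q) (t : ℤ)
    (ht : (3 : ℤ) ∣ (t - 1))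
    (g : ℝ → ℝ)
    (hg : ∀ k, g k = 3 + 2 * Real.cos k + 2 * Real.cos ((t : ℝ) * k) +
      2 * Real.cos (((t : ℝ) + 1) * k)) :
    Set.range (fun k : ℝ => 3 - Real.sqrt (g k + q ^ 2)) =
      Set.Icc (3 - Real.sqrt (9 + q ^ 2)) (3 - q) := by
  obtain ⟨m, hm⟩ := ht
  have htm : (t : ℝ) = 3 * m + 1 := by
    have : t = 3 * m + 1 := by linarith
    rw [this]; push_cast; ring
  have h0 : ∀ k, 0 ≤ g k := by
    intro k
    have h1 : (t : ℝ) * k = ((t : ℝ) + 1) * k - k := by ring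
    have h2 := Real.cos_sub (((t : ℝ) + 1) * k) k
    have h3 := Real.sin_sq_add_cos_sq k
    have h4 := Real.sin_sq_add_cos_sq (((t : ℝ) + 1) * k)
    rw [hg k, h1, h2]
    nlinarith [sq_nonneg (1 + Real.cos k + Real.cos (((t : ℝ) + 1) * k)),
      sq_nonneg (Real.sin k + Real.sin (((t : ℝ) + 1) * k))]
  have h9 : ∀ k, g k ≤ 9 := by
    intro k; rw [hg k]
    nlinarith [Real.cos_le_one k, Real.cos_le_one ((t : ℝ) * k),
      Real.cos_le_one (((t : ℝ) + 1) * k)]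
  have hg0 : g 0 = 9 := by rw [hg 0]; norm_num
  -- value at k₀ = 2π/3
  have c23 : Real.cos (2 * π / 3) = -(1 / 2) := by
    have : (2 : ℝ) * π / 3 = π - π / 3 := by ring
    rw [this, Real.cos_pi_sub, Real.cos_pi_div_three]
  have c43 : Real.cos (4 * π / 3) = -(1 / 2) := by
    have : (4 : ℝ) * π / 3 = π + π / 3 := by ring
    rw [this, Real.cos_add, Real.cos_pi, Real.sin_pi, Real.cos_pi_div_three]
    ring
  have hgk0 : g (2 * π / 3) = 0 := by
    rw [hg (2 * π / 3)]
    have e1 : (t : ℝ) * (2 * π / 3) = 2 * π / 3 + (m : ℝ) * (2 * π) := by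
      rw [htm]; ring
    have e2 : ((t : ℝ) + 1) * (2 * π / 3) = 4 * π / 3 + (m : ℝ) * (2 * π) := by
      rw [htm]; ring
    rw [e1, e2, Real.cos_add_int_mul_two_pi, Real.cos_add_int_mul_two_pi, c23, c43]
    ring
  set f : ℝ → ℝ := fun k => 3 - Real.sqrt (g k + q ^ 2) with hf
  have hgc : Continuous g := by
    have : g = fun k => 3 + 2 * Real.cos k + 2 * Real.cos ((t : ℝ) * k) +
        2 * Real.cos (((t : ℝ) + 1) * k) := funext hg
    rw [this]; fun_prop
  have hfc : Continuous f := by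
    apply continuous_const.sub
    exact Real.continuous_sqrt.comp (hgc.add continuous_const)
  have hf0 : f 0 = 3 - Real.sqrt (9 + q ^ 2) := by simp [hf, hg0]
  have hfk0 : f (2 * π / 3) = 3 - q := by
    simp only [hf, hgk0, zero_add, Real.sqrt_sq hq.le]
  ext y
  constructor
  · rintro ⟨k, rfl⟩
    have hle : Real.sqrt (g k + q ^ 2) ≤ Real.sqrt (9 + q ^ 2) :=
      Real.sqrt_le_sqrt (by linarith [h9 k])
    have hge : q ≤ Real.sqrt (g k + q ^ 2) := by
      rw [Real.le_sqrt hq.le (by nlinarith [h0 k])]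
      linarith [h0 k]
    have hfk : f k = 3 - Real.sqrt (g k + q ^ 2) := rfl
    exact ⟨by rw [hfk]; linarith, by rw [hfk]; linarith⟩
  · intro hy
    have hsub := intermediate_value_Icc
      (show (0 : ℝ) ≤ 2 * π / 3 by positivity) hfc.continuousOn
    have hmem : y ∈ Set.Icc (f 0) (f (2 * π / 3)) := by
      rw [hf0, hfk0]; exact hy
    obtain ⟨k, _, hk⟩ := hsub hmem
    exact ⟨k, hk⟩
end

section
/- Let F : ℝ^n → ℝ be continuous and 2π-periodic in each coordinate, and for t ∈ ℤ^{n-1} let B_t = {k ∈ ℝ^n : t₁k₁ + ... + t_{n-1}k_{n-1} - k_n ∈ 2πℤ}. Suppose k₀ ∈ ℝ^n is a global minimum point of F. Then the infimum of F over B_t converges to F(k₀) as |t| → ∞; that is, for every ε > 0 there is R > 0 such that for all t with |t| ≥ R, inf_{k ∈ B_t} F(k) ≤ F(k₀) + ε (and trivially inf_{k ∈ B_t} F(k) ≥ F(k₀)). -/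
open Real

/-- Abstract core of asymptotic isospectrality: for `F : ℝ^{n} × ℝ → ℝ` continuous
and `2π`-periodic in each coordinate with global minimum at `k₀`, the infimum of `F`
over `B_t = {(x,y) : ⟨t,x⟩ - y ∈ 2πℤ}` converges to `F k₀` as `|t| → ∞`. -/
theorem asymptotic_isospectrality_core {n : ℕ}
    (F : (Fin n → ℝ) × ℝ → ℝ)
    (hF : Continuous F)
    (hper : ∀ (k : (Fin n → ℝ) × ℝ) (i : Fin n),
      F (Function.update k.1 i (k.1 i + 2 * π), k.2) = F k)
    (hper' : ∀ k : (Fin n → ℝ) × ℝ, F (k.1, k.2 + 2 * π) = F k)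
    (k₀ : (Fin n → ℝ) × ℝ)
    (hmin : ∀ k, F k₀ ≤ F k) :
    ∀ ε > 0, ∃ R > 0, ∀ t : Fin n → ℤ,
      R ≤ Real.sqrt (∑ i, (t i : ℝ) ^ 2) →
      sInf (F '' {k : (Fin n → ℝ) × ℝ |
          ∃ m : ℤ, (∑ i, (t i : ℝ) * k.1 i) - k.2 = 2 * π * m})
        ≤ F k₀ + ε ∧
      F k₀ ≤ sInf (F '' {k : (Fin n → ℝ) × ℝ |
          ∃ m : ℤ, (∑ i, (t i : ℝ) * k.1 i) - k.2 = 2 * π * m}) := by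
  intro ε hε
  obtain ⟨δ, hδ, hcont⟩ := Metric.continuousAt_iff.mp (hF.continuousAt (x := k₀)) ε hε
  refine ⟨max 1 (2 * π / δ), lt_of_lt_of_le one_pos (le_max_left _ _), fun t hT => ?_⟩
  set T := Real.sqrt (∑ i, (t i : ℝ) ^ 2) with hTdef
  have hT1 : (1 : ℝ) ≤ T := le_trans (le_max_left _ _) hT
  have hT0 : 0 < T := lt_of_lt_of_le one_pos hT1
  have hT2 : 2 * π / δ ≤ T := le_trans (le_max_right _ _) hT
  have hTsq : T ^ 2 = ∑ i, (t i : ℝ) ^ 2 := by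
    rw [hTdef, Real.sq_sqrt]
    exact Finset.sum_nonneg fun i _ => sq_nonneg _
  set S := ∑ i, (t i : ℝ) * k₀.1 i with hS
  set m : ℤ := round ((S - k₀.2) / (2 * π)) with hm
  set c : ℝ := (2 * π * m + k₀.2 - S) / T ^ 2 with hc
  set x : Fin n → ℝ := fun i => k₀.1 i + c * t i with hx
  have hmem : (x, k₀.2) ∈ {k : (Fin n → ℝ) × ℝ |
      ∃ m : ℤ, (∑ i, (t i : ℝ) * k.1 i) - k.2 = 2 * π * m} := by
    refine ⟨m, ?_⟩
    have : ∑ i, (t i : ℝ) * x i = S + c * T ^ 2 := by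
      simp only [hx, mul_add]
      rw [Finset.sum_add_distrib, hTsq, Finset.mul_sum]
      congr 1
      refine Finset.sum_congr rfl fun i _ => by ring
    rw [this, hc]
    field_simp
    ring
  -- bound |c|
  have hpi : 0 < π := Real.pi_pos
  have hcb : |c| ≤ π / T ^ 2 := by
    rw [hc, abs_div, abs_of_pos (by positivity : (0:ℝ) < T ^ 2)]
    apply div_le_div_of_nonneg_right _ (by positivity)
    have h1 : |((S - k₀.2) / (2 * π)) - m| ≤ 1 / 2 := abs_sub_round _
    have h2 : 2 * π * m + k₀.2 - S = -(2 * π) * (((S - k₀.2) / (2 * π)) - m) := by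
      field_simp; ring
    rw [h2, abs_mul, abs_neg, abs_of_pos (by positivity : (0:ℝ) < 2 * π)]
    calc 2 * π * |((S - k₀.2) / (2 * π)) - m| ≤ 2 * π * (1 / 2) := by
          exact mul_le_mul_of_nonneg_left h1 (by positivity)
      _ = π := by ring
  have hti : ∀ i, |(t i : ℝ)| ≤ T := by
    intro i
    rw [← Real.sqrt_sq_eq_abs]
    exact Real.sqrt_le_sqrt (Finset.single_le_sum (fun j _ => sq_nonneg ((t j : ℝ)))
      (Finset.mem_univ i))
  have hdist : dist ((x, k₀.2) : (Fin n → ℝ) × ℝ) k₀ < δ := by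
    rw [Prod.dist_eq]
    have h1 : dist x k₀.1 < δ := by
      rw [dist_pi_lt_iff hδ]
      intro i
      have : dist (x i) (k₀.1 i) = |c * t i| := by
        rw [hx, Real.dist_eq]; simp
      rw [this, abs_mul]
      calc |c| * |(t i : ℝ)| ≤ (π / T ^ 2) * T :=
            mul_le_mul hcb (hti i) (abs_nonneg _) (by positivity)
        _ = π / T := by field_simp
        _ ≤ π / (2 * π / δ) := by
            apply div_le_div_of_nonneg_left (le_of_lt hpi) (by positivity) hT2
        _ = δ / 2 := by field_simp
        _ < δ := by linarith
    have h2 : dist k₀.2 k₀.2 = 0 := dist_self _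
    calc max (dist x k₀.1) (dist k₀.2 k₀.2) = max (dist x k₀.1) 0 := by rw [h2]
      _ = dist x k₀.1 := max_eq_left dist_nonneg
      _ < δ := h1
  have hFk : F (x, k₀.2) ≤ F k₀ + ε := by
    have := hcont hdist
    rw [Real.dist_eq] at this
    have := abs_lt.mp this
    linarith [this.2]
  have hbdd : BddBelow (F '' {k : (Fin n → ℝ) × ℝ |
      ∃ m : ℤ, (∑ i, (t i : ℝ) * k.1 i) - k.2 = 2 * π * m}) := by
    refine ⟨F k₀, fun y hy => ?_⟩
    obtain ⟨k, _, rfl⟩ := hy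
    exact hmin k
  constructor
  · exact le_trans (csInf_le hbdd ⟨_, hmem, rfl⟩) hFk
  · apply le_csInf ⟨F (x, k₀.2), Set.mem_image_of_mem F hmem⟩
    rintro y ⟨k, _, rfl⟩
    exact hmin k
end
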